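/- Let Y be a Banach space and K ⊆ Y a sharp closed convex cone, inducing the partial order x ≤_K y ⟺ y − x ∈ K. Then (Y, ≤_K) is lower chain-complete: every nonempty lower bounded chain in (Y, ≤_K) has an infimum. -/

import Mathlib

/-- In a Banach space, the order generated by a sharp closed convex cone is lower
chain-complete. -/
theorem lower_chain_complete_of_sharp_cone {Y : Type*} [NormedAddCommGroup Y]
    [NormedSpace ℝ Y] [CompleteSpace Y]
    (K : Set Y) (hKclosed : IsClosed K) (hKconv : Convex ℝ K) (hK0 : (0:Y) ∈ K)
    (hKcone : ∀ y ∈ K, ∀ c : ℝ, 0 ≤ c → c • y ∈ K)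
    (hsharp : (interior {ψ : Y →L[ℝ] ℝ | ∀ y ∈ K, 0 ≤ ψ y}).Nonempty)
    (L : Set Y) (hLne : L.Nonempty)
    (hchain : ∀ u ∈ L, ∀ v ∈ L, u - v ∈ K ∨ v - u ∈ K)
    (hbdd : ∃ b : Y, ∀ z ∈ L, z - b ∈ K) :
    ∃ ystar : Y, (∀ z ∈ L, z - ystar ∈ K) ∧ ∀ w : Y, (∀ z ∈ L, z - w ∈ K) → ystar - w ∈ K := by
  classical
  obtain ⟨φ, hφ⟩ := hsharp
  obtain ⟨ε, hε, hball⟩ := Metric.mem_nhds_iff.mp (mem_interior_iff_mem_nhds.mp hφ)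
  have hφK : ∀ y ∈ K, 0 ≤ φ y := interior_subset hφ
  set ε₂ := ε / 2 with hε₂def
  have hε₂ : 0 < ε₂ := by positivity
  -- key: φ dominates ε₂ * norm on K
  have hkey : ∀ y ∈ K, ε₂ * ‖y‖ ≤ φ y := by
    intro y hy
    rcases eq_or_ne y 0 with rfl | hy0
    · simp
    · obtain ⟨g, hg1, hgy⟩ := exists_dual_vector ℝ y (norm_ne_zero_iff.mpr hy0)
      have hmem : φ - ε₂ • g ∈ Metric.ball φ ε := by
        rw [Metric.mem_ball, dist_eq_norm]
        have h1 : φ - ε₂ • g - φ = -(ε₂ • g) := by abel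
        rw [h1, norm_neg, norm_smul ε₂ g, hg1]
        rw [Real.norm_eq_abs, abs_of_pos hε₂]
        simp only [mul_one, hε₂def]
        linarith
      have h0 := hball hmem y hy
      change 0 ≤ (φ - ε₂ • g) y at h0
      have h2 : (φ - ε₂ • g) y = φ y - ε₂ * g y := by
        simp [ContinuousLinearMap.sub_apply, ContinuousLinearMap.smul_apply, smul_eq_mul]
      have h3 : g y = ‖y‖ := by simpa using hgy
      rw [h2, h3] at h0
      linarith
  obtain ⟨b, hb⟩ := hbdd
  have hlb : ∀ z ∈ L, φ b ≤ φ z := by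
    intro z hz
    have := hφK _ (hb z hz)
    rw [map_sub] at this
    linarith
  have hbdd' : BddBelow (φ '' L) := ⟨φ b, by rintro _ ⟨zz, hzz, rfl⟩; exact hlb zz hzz⟩
  set m := sInf (φ '' L) with hm
  have hmle : ∀ zz ∈ L, m ≤ φ zz := fun zz hzz => csInf_le hbdd' ⟨zz, hzz, rfl⟩
  have hseq : ∀ n : ℕ, ∃ zz, zz ∈ L ∧ φ zz < m + 1 / (n + 1) := by
    intro n
    have hne : (φ '' L).Nonempty := hLne.image φ
    have hpos : (0:ℝ) < 1 / (n + 1) := by positivity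
    have hlt : sInf (φ '' L) < m + 1 / (n + 1) := by rw [← hm]; linarith
    obtain ⟨_, ⟨zz, hzz, rfl⟩, hlt'⟩ := exists_lt_of_csInf_lt hne hlt
    exact ⟨zz, hzz, hlt'⟩
  choose z hzL hzφ using hseq
  -- quantitative bound
  have hbound : ∀ (u : Y), u ∈ L → ∀ n : ℕ, z n - u ∈ K →
      ‖z n - u‖ ≤ (1 / (n + 1)) / ε₂ := by
    intro u hu n hmem
    have h1 := hkey _ hmem
    have h2 : φ (z n - u) = φ (z n) - φ u := map_sub φ _ _
    have h3 : φ (z n) - φ u < 1 / (n + 1) := by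
      have h4 := hmle u hu
      have h5 := hzφ n
      linarith
    rw [le_div_iff₀ hε₂]
    nlinarith
  have hcau : CauchySeq z := by
    refine cauchySeq_of_le_tendsto_0 (fun N : ℕ => (1 / (N + 1)) / ε₂) ?_ ?_
    · intro n k N hn hk
      have hmono : ∀ j : ℕ, N ≤ j → (1 / (j + 1) : ℝ) / ε₂ ≤ (1 / (N + 1)) / ε₂ := by
        intro j hj
        gcongr
      rcases hchain _ (hzL n) _ (hzL k) with h | h
      · calc dist (z n) (z k) = ‖z n - z k‖ := dist_eq_norm _ _
          _ ≤ (1 / (n + 1)) / ε₂ := hbound _ (hzL k) n h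
          _ ≤ (1 / (N + 1)) / ε₂ := hmono n hn
      · calc dist (z n) (z k) = ‖z k - z n‖ := by rw [dist_eq_norm, norm_sub_rev]
          _ ≤ (1 / (k + 1)) / ε₂ := hbound _ (hzL n) k h
          _ ≤ (1 / (N + 1)) / ε₂ := hmono k hk
    · have h := tendsto_one_div_add_atTop_nhds_zero_nat.div_const ε₂
      simpa using h
  obtain ⟨ystar, hlim⟩ := cauchySeq_tendsto_of_complete hcau
  refine ⟨ystar, ?_, ?_⟩
  · -- ystar is a lower bound of L
    intro zz hzz
    have hcl : zz - ystar ∈ closure K := by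
      rw [Metric.mem_closure_iff]
      intro δ hδ
      obtain ⟨N, hN⟩ := Metric.tendsto_atTop.mp hlim (δ / 2) (by linarith)
      obtain ⟨n₀, hn₀⟩ := exists_nat_one_div_lt (show (0:ℝ) < ε₂ * (δ / 2) by positivity)
      set n := max N n₀
      have hdistn : dist (z n) ystar < δ / 2 := hN n (le_max_left _ _)
      have hsmall : (1 / (n + 1) : ℝ) / ε₂ < δ / 2 := by
        have h1 : (1 / (n + 1) : ℝ) ≤ 1 / (n₀ + 1) := by
          gcongr
          exact_mod_cast le_max_right N n₀
        have h2 : (1 / (n₀ + 1) : ℝ) < ε₂ * (δ / 2) := hn₀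
        rw [div_lt_iff₀ hε₂]
        calc (1 / (n + 1) : ℝ) ≤ 1 / (n₀ + 1) := h1
          _ < ε₂ * (δ / 2) := h2
          _ = δ / 2 * ε₂ := by ring
      rcases hchain zz hzz _ (hzL n) with h | h
      · refine ⟨zz - z n, h, ?_⟩
        rw [dist_eq_norm]
        have : zz - ystar - (zz - z n) = z n - ystar := by abel
        rw [this, ← dist_eq_norm]
        linarith
      · refine ⟨0, hK0, ?_⟩
        rw [dist_eq_norm, sub_zero]
        have h1 : ‖zz - ystar‖ ≤ ‖zz - z n‖ + ‖z n - ystar‖ := by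
          have := norm_sub_le_norm_sub_add_norm_sub zz (z n) ystar
          simpa using this
        have h2 : ‖zz - z n‖ = ‖z n - zz‖ := norm_sub_rev _ _
        have h3 := hbound zz hzz n h
        have h4 : ‖z n - ystar‖ < δ / 2 := by rw [← dist_eq_norm]; exact hdistn
        linarith
    rwa [hKclosed.closure_eq] at hcl
  · -- ystar is the greatest lower bound
    intro w hw
    have hmem : ∀ n, z n - w ∈ K := fun n => hw _ (hzL n)
    have hlim' : Filter.Tendsto (fun n => z n - w) Filter.atTop (nhds (ystar - w)) :=
      hlim.sub tendsto_const_nhds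
    exact hKclosed.mem_of_tendsto hlim' (Filter.Eventually.of_forall hmem)
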